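/- For the triangular lattice with nearest-neighbor pair interactions given by V₀ ∈ C²((0,∞)), the atomistic and modified Legendre–Hadamard stability constants at the uniform dilation M(t) = tM coincide: λ_atom(M(t)) = λ̃_LH(M(t)) = ½(V₀''(t) + V₀'(t)/t) − ¼|V₀''(t) − V₀'(t)/t|. -/

import Mathlib

open Real

noncomputable section

/-- The nearest-neighbour directions of the triangular lattice in lattice
coordinates: `𝓡 = {±e₁, ±e₂, ±(e₂−e₁)}`. -/
def triR : Finset (Fin 2 → ℤ) :=
  {![1, 0], ![-1, 0], ![0, 1], ![0, -1], ![-1, 1], ![1, -1]}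

/-- The lattice basis matrix `M` of the triangular lattice. -/
def triM : Matrix (Fin 2) (Fin 2) ℝ :=
  !![1, 1/2; 0, Real.sqrt 3 / 2]

/-- `Mρ ∈ ℝ²`. -/
def triMvec (ρ : Fin 2 → ℤ) : Fin 2 → ℝ :=
  triM.mulVec (fun i => (ρ i : ℝ))

/-- The Hessian `K(t) = D²W_atom((tMρ)_ρ)` of the pair-potential energy at the
uniform dilation `M(t) = tM`:
`K_{jρlσ} = δ_{ρσ}((V₀'(t)/t)(δ_{jl} − (Mρ)_j(Mρ)_l) + V₀''(t)(Mρ)_j(Mρ)_l)`. -/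
def triK (a b : ℝ) : Fin 2 → ↥triR → Fin 2 → ↥triR → ℝ :=
  fun j ρ l σ =>
    if ρ = σ then
      a * ((if j = l then 1 else 0) - triMvec ρ.1 j * triMvec ρ.1 l) +
        b * (triMvec ρ.1 j * triMvec ρ.1 l)
    else 0

/-- `ρ·k`. -/
def ipk (ρ : Fin 2 → ℤ) (k : Fin 2 → ℝ) : ℝ :=
  ∑ i, (ρ i : ℝ) * k i

/-- `K[ξ⊗v, ξ⊗v]`. -/
def Qform (K : Fin 2 → ↥triR → Fin 2 → ↥triR → ℝ) (ξ : Fin 2 → ℝ)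
    (v : ↥triR → ℝ) : ℝ :=
  ∑ j, ∑ l, ∑ ρ : ↥triR, ∑ σ : ↥triR, K j ρ l σ * (ξ j * v ρ) * (ξ l * v σ)

/-- The atomistic stability constant (cosine/sine representation). -/
def lamAtomCS (K : Fin 2 → ↥triR → Fin 2 → ↥triR → ℝ) : ℝ :=
  sInf { r : ℝ | ∃ (ξ k : Fin 2 → ℝ), ξ ≠ 0 ∧ k ≠ 0 ∧
    (∀ i, k i ∈ Set.Ico 0 (2 * π)) ∧
    r = (Qform K ξ (fun ρ => Real.cos (ipk ρ.1 k) - 1) +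
          Qform K ξ (fun ρ => Real.sin (ipk ρ.1 k))) /
        ((∑ i, (ξ i) ^ 2) *
          ((∑ ρ : ↥triR, (Real.cos (ipk ρ.1 k) - 1) ^ 2) +
            (∑ ρ : ↥triR, (Real.sin (ipk ρ.1 k)) ^ 2))) }

/-- The modified Legendre–Hadamard constant `λ̃_LH`. -/
def lamTildeLH (K : Fin 2 → ↥triR → Fin 2 → ↥triR → ℝ) : ℝ :=
  sInf { r : ℝ | ∃ ξ η : Fin 2 → ℝ, ξ ≠ 0 ∧ η ≠ 0 ∧
    r = Qform K ξ (fun ρ => ipk ρ.1 η) /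
        ((∑ i, (ξ i) ^ 2) * (∑ ρ : ↥triR, (ipk ρ.1 η) ^ 2)) }


private lemma sq_pos' {c : ℝ} (h : c ≠ 0) : 0 < c ^ 2 :=
  lt_of_le_of_ne (sq_nonneg c) (Ne.symm (pow_ne_zero 2 h))

private lemma cos_lt_one' {θ : ℝ} (h0 : 0 ≤ θ) (h2 : θ < 2 * π) (hne : θ ≠ 0) :
    Real.cos θ < 1 := by
  rcases lt_or_eq_of_le (Real.cos_le_one θ) with h | h
  · exact h
  · exfalso
    exact hne ((Real.cos_eq_one_iff_of_lt_of_lt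
      (by nlinarith [Real.pi_pos]) h2).1 h)

private lemma sInf_eq_min {S : Set ℝ} {m1 m2 : ℝ} (h1 : m1 ∈ S) (h2 : m2 ∈ S)
    (hlb : ∀ r ∈ S, min m1 m2 ≤ r) : sInf S = min m1 m2 :=
  le_antisymm
    (le_min (csInf_le ⟨min m1 m2, fun r hr => hlb r hr⟩ h1)
      (csInf_le ⟨min m1 m2, fun r hr => hlb r hr⟩ h2))
    (le_csInf ⟨m1, h1⟩ hlb)

private lemma bound_min (m1 m2 N D : ℝ) (hD : 0 < D) (h : min m1 m2 * D ≤ N) :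
    min m1 m2 ≤ N / D := (le_div_iff₀ hD).2 h

private lemma eq_div_helper (m N D : ℝ) (hD : 0 < D) (h : m * D = N) :
    m = N / D := by
  rw [eq_comm, div_eq_iff (ne_of_gt hD), eq_comm]
  exact h

private lemma sum6 (f : (Fin 2 → ℤ) → ℝ) :
    ∑ ρ : ↥triR, f ρ.1 =
      f ![1,0] + f ![-1,0] + f ![0,1] + f ![0,-1] + f ![-1,1] + f ![1,-1] := by
  rw [Finset.sum_coe_sort triR f]
  show ∑ ρ ∈ triR, f ρ = _
  rw [triR, Finset.sum_insert (by decide), Finset.sum_insert (by decide),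
    Finset.sum_insert (by decide), Finset.sum_insert (by decide),
    Finset.sum_insert (by decide), Finset.sum_singleton]
  ring

private lemma ipk10 (k : Fin 2 → ℝ) : ipk ![1,0] k = k 0 := by
  simp [ipk, Fin.sum_univ_two]
private lemma ipkm10 (k : Fin 2 → ℝ) : ipk ![-1,0] k = -k 0 := by
  simp [ipk, Fin.sum_univ_two]
private lemma ipk01 (k : Fin 2 → ℝ) : ipk ![0,1] k = k 1 := by
  simp [ipk, Fin.sum_univ_two]
private lemma ipk0m1 (k : Fin 2 → ℝ) : ipk ![0,-1] k = -k 1 := by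
  simp [ipk, Fin.sum_univ_two]
private lemma ipkm11 (k : Fin 2 → ℝ) : ipk ![-1,1] k = k 1 - k 0 := by
  simp [ipk, Fin.sum_univ_two]; ring
private lemma ipk1m1 (k : Fin 2 → ℝ) : ipk ![1,-1] k = k 0 - k 1 := by
  simp [ipk, Fin.sum_univ_two]; ring

private lemma Qform_diag (a b : ℝ) (ξ : Fin 2 → ℝ) (v : ↥triR → ℝ) :
    Qform (triK a b) ξ v = ∑ ρ : ↥triR, (v ρ)^2 *
      (a * ((ξ 0^2 + ξ 1^2) - (triMvec ρ.1 0 * ξ 0 + triMvec ρ.1 1 * ξ 1)^2)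
        + b * (triMvec ρ.1 0 * ξ 0 + triMvec ρ.1 1 * ξ 1)^2) := by
  unfold Qform triK
  simp only [Fin.sum_univ_two, ite_mul, zero_mul, Finset.sum_ite_eq,
    Finset.mem_univ, if_true]
  norm_num
  rw [← Finset.sum_add_distrib, ← Finset.sum_add_distrib, ← Finset.sum_add_distrib]
  refine Finset.sum_congr rfl fun ρ _ => ?_
  ring

private lemma Qform_eval (a b : ℝ) (ξ : Fin 2 → ℝ) (g : (Fin 2 → ℤ) → ℝ) :
    Qform (triK a b) ξ (fun ρ => g ρ.1) =
      ((g ![1,0]) ^ 2 + (g ![-1,0]) ^ 2) *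
        (a * ((ξ 0^2 + ξ 1^2) - (ξ 0)^2) + b * (ξ 0)^2)
    + ((g ![0,1]) ^ 2 + (g ![0,-1]) ^ 2) *
        (a * ((ξ 0^2 + ξ 1^2) - (ξ 0/2 + Real.sqrt 3/2 * ξ 1)^2)
          + b * (ξ 0/2 + Real.sqrt 3/2 * ξ 1)^2)
    + ((g ![-1,1]) ^ 2 + (g ![1,-1]) ^ 2) *
        (a * ((ξ 0^2 + ξ 1^2) - (-(ξ 0)/2 + Real.sqrt 3/2 * ξ 1)^2)
          + b * (-(ξ 0)/2 + Real.sqrt 3/2 * ξ 1)^2) := by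
  rw [Qform_diag]
  rw [sum6 (fun w => (g w)^2 *
      (a * ((ξ 0^2 + ξ 1^2) - (triMvec w 0 * ξ 0 + triMvec w 1 * ξ 1)^2)
        + b * (triMvec w 0 * ξ 0 + triMvec w 1 * ξ 1)^2))]
  simp [triMvec, triM, Matrix.mulVec, dotProduct, Fin.sum_univ_two]
  ring

set_option maxHeartbeats 2000000 in
private lemma main_core (a b : ℝ) :
    (lamAtomCS (triK a b) = lamTildeLH (triK a b)) ∧
      (lamTildeLH (triK a b) = 1 / 2 * (b + a) - 1 / 4 * |b - a|) := by
  have h3 : Real.sqrt 3 ^ 2 = 3 := Real.sq_sqrt (by norm_num)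
  have hA : lamAtomCS (triK a b) = min ((3 * a + b) / 4) ((a + 3 * b) / 4) := by
    unfold lamAtomCS
    refine sInf_eq_min ?_ ?_ ?_
    · -- witness for (3a+b)/4 : ξ = (1, √3), k = (π, 0)
      refine ⟨![1, Real.sqrt 3], ![π, 0], ?_, ?_, ?_, ?_⟩
      · intro h
        have h0 := congrFun h 0
        norm_num at h0
      · intro h
        have h0 := congrFun h 0
        simp at h0
      · intro i
        fin_cases i
        · exact ⟨by simpa using Real.pi_pos.le,
            by show π < 2 * π; nlinarith [Real.pi_pos]⟩
        · exact ⟨by simp,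
            by show (0:ℝ) < 2 * π; nlinarith [Real.pi_pos]⟩
      · rw [Qform_eval a b ![1, Real.sqrt 3] (fun v => Real.cos (ipk v ![π, 0]) - 1),
            Qform_eval a b ![1, Real.sqrt 3] (fun v => Real.sin (ipk v ![π, 0])),
            sum6 (fun v => (Real.cos (ipk v ![π, 0]) - 1) ^ 2),
            sum6 (fun v => (Real.sin (ipk v ![π, 0])) ^ 2), Fin.sum_univ_two]
        simp only [ipk10, ipkm10, ipk01, ipk0m1, ipkm11, ipk1m1,
          Matrix.cons_val_zero, Matrix.cons_val_one, Matrix.head_cons,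
          zero_sub, sub_zero, Real.cos_neg, Real.sin_neg, Real.cos_pi,
          Real.sin_pi, Real.cos_zero, Real.sin_zero, neg_zero]
        refine eq_div_helper _ _ _ ?_ ?_
        · nlinarith [h3, Real.sqrt_nonneg 3]
        · linear_combination (2 * b - 2 * a - 2 * Real.sqrt 3 ^ 2 * b + 2 * Real.sqrt 3 ^ 2 * a) * h3
    · -- witness for (a+3b)/4 : ξ = (√3, -1), k = (π, 0)
      refine ⟨![Real.sqrt 3, -1], ![π, 0], ?_, ?_, ?_, ?_⟩
      · intro h
        have h0 := congrFun h 1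
        norm_num at h0
      · intro h
        have h0 := congrFun h 0
        simp at h0
      · intro i
        fin_cases i
        · exact ⟨by simpa using Real.pi_pos.le,
            by show π < 2 * π; nlinarith [Real.pi_pos]⟩
        · exact ⟨by simp,
            by show (0:ℝ) < 2 * π; nlinarith [Real.pi_pos]⟩
      · rw [Qform_eval a b ![Real.sqrt 3, -1] (fun v => Real.cos (ipk v ![π, 0]) - 1),
            Qform_eval a b ![Real.sqrt 3, -1] (fun v => Real.sin (ipk v ![π, 0])),
            sum6 (fun v => (Real.cos (ipk v ![π, 0]) - 1) ^ 2),
            sum6 (fun v => (Real.sin (ipk v ![π, 0])) ^ 2), Fin.sum_univ_two]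
        simp only [ipk10, ipkm10, ipk01, ipk0m1, ipkm11, ipk1m1,
          Matrix.cons_val_zero, Matrix.cons_val_one, Matrix.head_cons,
          zero_sub, sub_zero, Real.cos_neg, Real.sin_neg, Real.cos_pi,
          Real.sin_pi, Real.cos_zero, Real.sin_zero, neg_zero]
        refine eq_div_helper _ _ _ ?_ ?_
        · nlinarith [h3, Real.sqrt_nonneg 3]
        · linear_combination (4 * a - 4 * b) * h3
    · -- lower bound
      rintro r ⟨ξ, k, hξ, hkne, hbox, rfl⟩
      rw [Qform_eval a b ξ (fun v => Real.cos (ipk v k) - 1),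
          Qform_eval a b ξ (fun v => Real.sin (ipk v k)),
          sum6 (fun v => (Real.cos (ipk v k) - 1) ^ 2),
          sum6 (fun v => (Real.sin (ipk v k)) ^ 2), Fin.sum_univ_two]
      simp only [ipk10, ipkm10, ipk01, ipk0m1, ipkm11, ipk1m1,
        Real.cos_neg, Real.sin_neg, Real.cos_sub, Real.sin_sub]
      have h0 : Real.sin (k 0) ^ 2 + Real.cos (k 0) ^ 2 = 1 := Real.sin_sq_add_cos_sq _
      have h1 : Real.sin (k 1) ^ 2 + Real.cos (k 1) ^ 2 = 1 := Real.sin_sq_add_cos_sq _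
      have hs : 0 < ξ 0 ^ 2 + ξ 1 ^ 2 := by
        have : ξ 0 ≠ 0 ∨ ξ 1 ≠ 0 := by
          by_contra hcon
          push_neg at hcon
          exact hξ (funext fun i => by fin_cases i <;> simp [hcon.1, hcon.2])
        rcases this with h | h
        · nlinarith [sq_pos' h, sq_nonneg (ξ 1)]
        · nlinarith [sq_pos' h, sq_nonneg (ξ 0)]
      have hu : 0 < (2 * (Real.cos (k 0) - 1) ^ 2 + 2 * Real.sin (k 0) ^ 2) + (2 * (Real.cos (k 1) - 1) ^ 2 + 2 * Real.sin (k 1) ^ 2) + (2 * (Real.cos (k 1) * Real.cos (k 0) + Real.sin (k 1) * Real.sin (k 0) - 1) ^ 2 + 2 * (Real.sin (k 1) * Real.cos (k 0) - Real.cos (k 1) * Real.sin (k 0)) ^ 2) := by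
        have hk01 : k 0 ≠ 0 ∨ k 1 ≠ 0 := by
          by_contra hcon
          push_neg at hcon
          exact hkne (funext fun i => by fin_cases i <;> simp [hcon.1, hcon.2])
        rcases hk01 with h | h
        · have hcos := cos_lt_one' (hbox 0).1 (hbox 0).2 h
          nlinarith [sq_pos' (show Real.cos (k 0) - 1 ≠ 0 from sub_ne_zero.2 (ne_of_lt hcos)),
            sq_nonneg (Real.sin (k 0)), sq_nonneg (Real.cos (k 1) - 1), sq_nonneg (Real.sin (k 1)), sq_nonneg ((Real.cos (k 1) * Real.cos (k 0) + Real.sin (k 1) * Real.sin (k 0) - 1)), sq_nonneg ((Real.sin (k 1) * Real.cos (k 0) - Real.cos (k 1) * Real.sin (k 0)))]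
        · have hcos := cos_lt_one' (hbox 1).1 (hbox 1).2 h
          nlinarith [sq_pos' (show Real.cos (k 1) - 1 ≠ 0 from sub_ne_zero.2 (ne_of_lt hcos)),
            sq_nonneg (Real.sin (k 0)), sq_nonneg (Real.cos (k 0) - 1), sq_nonneg (Real.sin (k 1)), sq_nonneg ((Real.cos (k 1) * Real.cos (k 0) + Real.sin (k 1) * Real.sin (k 0) - 1)), sq_nonneg ((Real.sin (k 1) * Real.cos (k 0) - Real.cos (k 1) * Real.sin (k 0)))]
      refine bound_min _ _ _ _ ?_ ?_
      · linarith [mul_pos hs hu]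
      · rcases le_total a b with hab | hab
        · rw [min_eq_left (by linarith : (3 * a + b) / 4 ≤ (a + 3 * b) / 4)]
          have key : 4 * ((2 * (Real.cos (k 0) - 1) ^ 2 + 2 * Real.sin (k 0) ^ 2) * (a * ((ξ 0 ^ 2 + ξ 1 ^ 2) - ξ 0 ^ 2) + b * ξ 0 ^ 2) + (2 * (Real.cos (k 1) - 1) ^ 2 + 2 * Real.sin (k 1) ^ 2) * (a * ((ξ 0 ^ 2 + ξ 1 ^ 2) - (ξ 0 / 2 + Real.sqrt 3 / 2 * ξ 1) ^ 2) + b * (ξ 0 / 2 + Real.sqrt 3 / 2 * ξ 1) ^ 2) + (2 * (Real.cos (k 1) * Real.cos (k 0) + Real.sin (k 1) * Real.sin (k 0) - 1) ^ 2 + 2 * (Real.sin (k 1) * Real.cos (k 0) - Real.cos (k 1) * Real.sin (k 0)) ^ 2) * (a * ((ξ 0 ^ 2 + ξ 1 ^ 2) - (-(ξ 0) / 2 + Real.sqrt 3 / 2 * ξ 1) ^ 2) + b * (-(ξ 0) / 2 + Real.sqrt 3 / 2 * ξ 1) ^ 2)) - (3 * a + b) * ((ξ 0 ^ 2 + ξ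 1 ^ 2) * ((2 * (Real.cos (k 0) - 1) ^ 2 + 2 * Real.sin (k 0) ^ 2) + (2 * (Real.cos (k 1) - 1) ^ 2 + 2 * Real.sin (k 1) ^ 2) + (2 * (Real.cos (k 1) * Real.cos (k 0) + Real.sin (k 1) * Real.sin (k 0) - 1) ^ 2 + 2 * (Real.sin (k 1) * Real.cos (k 0) - Real.cos (k 1) * Real.sin (k 0)) ^ 2)))
              = 2 * (b - a) * ((Real.sqrt 3 * (Real.cos (k 0) - 1) * ξ 0 + (2 * (Real.cos (k 1) - 1) - (Real.cos (k 0) - 1)) * ξ 1) ^ 2 + (Real.sqrt 3 * Real.sin (k 0) * ξ 0 + (2 * Real.sin (k 1) - Real.sin (k 0)) * ξ 1) ^ 2) := by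
            linear_combination (4 * ξ 1 ^ 2 * b + (-4) * ξ 1 ^ 2 * a + (-2) * ξ 0 ^ 2 * b + 2 * ξ 0 ^ 2 * a + 2 * Real.sin (k 1) ^ 2 * ξ 1 ^ 2 * b + (-2) * Real.sin (k 1) ^ 2 * ξ 1 ^ 2 * a + (-4) * Real.cos (k 1) * ξ 1 ^ 2 * b + 4 * Real.cos (k 1) * ξ 1 ^ 2 * a + 2 * Real.cos (k 1) ^ 2 * ξ 1 ^ 2 * b + (-2) * Real.cos (k 1) ^ 2 * ξ 1 ^ 2 * a + (-4) * Real.sin (k 0) * Real.sin (k 1) * ξ 1 ^ 2 * b + 4 * Real.sin (k 0) * Real.sin (k 1) * ξ 1 ^ 2 * a + (-2) * Real.sin (k 0) ^ 2 * ξ 0 ^ 2 * b + 2 * Real.sin (k 0) ^ 2 * ξ 0 ^ 2 * a + 2 * Real.sin (k 0) ^ 2 * Real.sin (k 1) ^ 2 * ξ 1 ^ 2 * b + (-2) * Real.sin (k 0) ^ 2 * Real.sin (k 1) ^ 2 * ξ 1 ^ 2 * a + 2 * Real.sin (k 0) ^ 2 * Real.cos (k 1) ^ 2 * ξ 1 ^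 2 * b + (-2) * Real.sin (k 0) ^ 2 * Real.cos (k 1) ^ 2 * ξ 1 ^ 2 * a + 4 * Real.cos (k 0) * ξ 0 ^ 2 * b + (-4) * Real.cos (k 0) * ξ 0 ^ 2 * a + (-4) * Real.cos (k 0) * Real.cos (k 1) * ξ 1 ^ 2 * b + 4 * Real.cos (k 0) * Real.cos (k 1) * ξ 1 ^ 2 * a + (-2) * Real.cos (k 0) ^ 2 * ξ 0 ^ 2 * b + 2 * Real.cos (k 0) ^ 2 * ξ 0 ^ 2 * a + 2 * Real.cos (k 0) ^ 2 * Real.sin (k 1) ^ 2 * ξ 1 ^ 2 * b + (-2) * Real.cos (k 0) ^ 2 * Real.sin (k 1) ^ 2 * ξ 1 ^ 2 * a + 2 * Real.cos (k 0) ^ 2 * Real.cos (k 1) ^ 2 * ξ 1 ^ 2 * b + (-2) * Real.cos (k 0) ^ 2 * Real.cos (k 1) ^ 2 * ξ 1 ^ 2 * a) * h3 + ((-4) * ξ 1 ^ 2 * b + 4 * ξ 1 ^ 2 * a + 4 * ξ 0 * ξ 1 * Real.sqrt 3 * b + (-4) * ξ 0 * ξ 1 * Real.sqrt 3 * a + 4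 * Real.sin (k 1) ^ 2 * ξ 1 ^ 2 * b + (-4) * Real.sin (k 1) ^ 2 * ξ 1 ^ 2 * a + (-4) * Real.sin (k 1) ^ 2 * ξ 0 * ξ 1 * Real.sqrt 3 * b + 4 * Real.sin (k 1) ^ 2 * ξ 0 * ξ 1 * Real.sqrt 3 * a + 4 * Real.cos (k 1) ^ 2 * ξ 1 ^ 2 * b + (-4) * Real.cos (k 1) ^ 2 * ξ 1 ^ 2 * a + (-4) * Real.cos (k 1) ^ 2 * ξ 0 * ξ 1 * Real.sqrt 3 * b + 4 * Real.cos (k 1) ^ 2 * ξ 0 * ξ 1 * Real.sqrt 3 * a) * h0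
          linarith [key, mul_nonneg (sub_nonneg.2 hab)
            (add_nonneg (sq_nonneg ((Real.sqrt 3 * (Real.cos (k 0) - 1) * ξ 0 + (2 * (Real.cos (k 1) - 1) - (Real.cos (k 0) - 1)) * ξ 1))) (sq_nonneg ((Real.sqrt 3 * Real.sin (k 0) * ξ 0 + (2 * Real.sin (k 1) - Real.sin (k 0)) * ξ 1))))]
        · rw [min_eq_right (by linarith : (a + 3 * b) / 4 ≤ (3 * a + b) / 4)]
          have key : 4 * ((2 * (Real.cos (k 0) - 1) ^ 2 + 2 * Real.sin (k 0) ^ 2) * (a * ((ξ 0 ^ 2 + ξ 1 ^ 2) - ξ 0 ^ 2) + b * ξ 0 ^ 2) + (2 * (Real.cos (k 1) - 1) ^ 2 + 2 * Real.sin (k 1) ^ 2) * (a * ((ξ 0 ^ 2 + ξ 1 ^ 2) - (ξ 0 / 2 + Real.sqrt 3 / 2 * ξ 1) ^ 2) + b * (ξ 0 / 2 + Real.sqrt 3 / 2 * ξ 1) ^ 2) + (2 * (Real.cos (k 1) * Real.cos (k 0) + Real.sin (k 1) * Real.sin (k 0) - 1) ^ 2 + 2 * (Real.sin (k 1) * Real.cos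 (k 0) - Real.cos (k 1) * Real.sin (k 0)) ^ 2) * (a * ((ξ 0 ^ 2 + ξ 1 ^ 2) - (-(ξ 0) / 2 + Real.sqrt 3 / 2 * ξ 1) ^ 2) + b * (-(ξ 0) / 2 + Real.sqrt 3 / 2 * ξ 1) ^ 2)) - (a + 3 * b) * ((ξ 0 ^ 2 + ξ 1 ^ 2) * ((2 * (Real.cos (k 0) - 1) ^ 2 + 2 * Real.sin (k 0) ^ 2) + (2 * (Real.cos (k 1) - 1) ^ 2 + 2 * Real.sin (k 1) ^ 2) + (2 * (Real.cos (k 1) * Real.cos (k 0) + Real.sin (k 1) * Real.sin (k 0) - 1) ^ 2 + 2 * (Real.sin (k 1) * Real.cos (k 0) - Real.cos (k 1) * Real.sin (k 0)) ^ 2)))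
              = 2 * (a - b) * (((2 * (Real.cos (k 1) - 1) - (Real.cos (k 0) - 1)) * ξ 0 - Real.sqrt 3 * (Real.cos (k 0) - 1) * ξ 1) ^ 2 + ((2 * Real.sin (k 1) - Real.sin (k 0)) * ξ 0 - Real.sqrt 3 * Real.sin (k 0) * ξ 1) ^ 2) := by
            linear_combination (6 * ξ 1 ^ 2 * b + (-6) * ξ 1 ^ 2 * a + 2 * Real.sin (k 1) ^ 2 * ξ 1 ^ 2 * b + (-2) * Real.sin (k 1) ^ 2 * ξ 1 ^ 2 * a + (-4) * Real.cos (k 1) * ξ 1 ^ 2 * b + 4 * Real.cos (k 1) * ξ 1 ^ 2 * a + 2 * Real.cos (k 1) ^ 2 * ξ 1 ^ 2 * b + (-2) * Real.cos (k 1) ^ 2 * ξ 1 ^ 2 * a + (-4) * Real.sin (k 0) * Real.sin (k 1) * ξ 1 ^ 2 * b + 4 * Real.sin (k 0) * Real.sin (k 1) * ξ 1 ^ 2 * a + 2 * Real.sin (k 0) ^ 2 * ξ 1 ^ 2 * b + (-2) * Real.sin (k 0) ^ 2 * ξ 1 ^ 2 * a + 2 * Real.sin (k 0) ^ 2 * Real.sin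 (k 1) ^ 2 * ξ 1 ^ 2 * b + (-2) * Real.sin (k 0) ^ 2 * Real.sin (k 1) ^ 2 * ξ 1 ^ 2 * a + 2 * Real.sin (k 0) ^ 2 * Real.cos (k 1) ^ 2 * ξ 1 ^ 2 * b + (-2) * Real.sin (k 0) ^ 2 * Real.cos (k 1) ^ 2 * ξ 1 ^ 2 * a + (-4) * Real.cos (k 0) * ξ 1 ^ 2 * b + 4 * Real.cos (k 0) * ξ 1 ^ 2 * a + (-4) * Real.cos (k 0) * Real.cos (k 1) * ξ 1 ^ 2 * b + 4 * Real.cos (k 0) * Real.cos (k 1) * ξ 1 ^ 2 * a + 2 * Real.cos (k 0) ^ 2 * ξ 1 ^ 2 * b + (-2) * Real.cos (k 0) ^ 2 * ξ 1 ^ 2 * a + 2 * Real.cos (k 0) ^ 2 * Real.sin (k 1) ^ 2 * ξ 1 ^ 2 * b + (-2) * Real.cos (k 0) ^ 2 * Real.sin (k 1) ^ 2 * ξ 1 ^ 2 * a + 2 * Real.cos (k 0) ^ 2 * Real.cos (k 1) ^ 2 * ξ 1 ^ 2 * b + (-2) * Real.cos (k 0) ^ 2 * Real.cos (k 1) ^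 2 * ξ 1 ^ 2 * a) * h3 + (4 * ξ 0 * ξ 1 * Real.sqrt 3 * b + (-4) * ξ 0 * ξ 1 * Real.sqrt 3 * a + 4 * ξ 0 ^ 2 * b + (-4) * ξ 0 ^ 2 * a + (-4) * Real.sin (k 1) ^ 2 * ξ 0 * ξ 1 * Real.sqrt 3 * b + 4 * Real.sin (k 1) ^ 2 * ξ 0 * ξ 1 * Real.sqrt 3 * a + (-4) * Real.sin (k 1) ^ 2 * ξ 0 ^ 2 * b + 4 * Real.sin (k 1) ^ 2 * ξ 0 ^ 2 * a + (-4) * Real.cos (k 1) ^ 2 * ξ 0 * ξ 1 * Real.sqrt 3 * b + 4 * Real.cos (k 1) ^ 2 * ξ 0 * ξ 1 * Real.sqrt 3 * a + (-4) * Real.cos (k 1) ^ 2 * ξ 0 ^ 2 * b + 4 * Real.cos (k 1) ^ 2 * ξ 0 ^ 2 * a) * h0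
          linarith [key, mul_nonneg (sub_nonneg.2 hab)
            (add_nonneg (sq_nonneg (((2 * (Real.cos (k 1) - 1) - (Real.cos (k 0) - 1)) * ξ 0 - Real.sqrt 3 * (Real.cos (k 0) - 1) * ξ 1))) (sq_nonneg (((2 * Real.sin (k 1) - Real.sin (k 0)) * ξ 0 - Real.sqrt 3 * Real.sin (k 0) * ξ 1))))]
  have hL : lamTildeLH (triK a b) = min ((3 * a + b) / 4) ((a + 3 * b) / 4) := by
    unfold lamTildeLH
    refine sInf_eq_min ?_ ?_ ?_
    · -- witness: ξ = (0,1), η = (2,1)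
      refine ⟨![0, 1], ![2, 1], ?_, ?_, ?_⟩
      · intro h
        have h0 := congrFun h 1
        norm_num at h0
      · intro h
        have h0 := congrFun h 0
        norm_num at h0
      · rw [Qform_eval a b ![0, 1] (fun v => ipk v ![2, 1]),
            sum6 (fun v => (ipk v ![2, 1]) ^ 2), Fin.sum_univ_two]
        simp only [ipk10, ipkm10, ipk01, ipk0m1, ipkm11, ipk1m1,
          Matrix.cons_val_zero, Matrix.cons_val_one, Matrix.head_cons]
        refine eq_div_helper _ _ _ ?_ ?_
        · nlinarith [h3, Real.sqrt_nonneg 3]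
        · linear_combination (a - b) * h3
    · -- witness: ξ = (1,0), η = (2,1)
      refine ⟨![1, 0], ![2, 1], ?_, ?_, ?_⟩
      · intro h
        have h0 := congrFun h 0
        norm_num at h0
      · intro h
        have h0 := congrFun h 0
        norm_num at h0
      · rw [Qform_eval a b ![1, 0] (fun v => ipk v ![2, 1]),
            sum6 (fun v => (ipk v ![2, 1]) ^ 2), Fin.sum_univ_two]
        simp only [ipk10, ipkm10, ipk01, ipk0m1, ipkm11, ipk1m1,
          Matrix.cons_val_zero, Matrix.cons_val_one, Matrix.head_cons]
        refine eq_div_helper _ _ _ ?_ ?_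
        · nlinarith [h3, Real.sqrt_nonneg 3]
        · ring
    · rintro r ⟨ξ, η, hξ, hη, rfl⟩
      rw [Qform_eval a b ξ (fun v => ipk v η),
          sum6 (fun v => (ipk v η) ^ 2), Fin.sum_univ_two]
      simp only [ipk10, ipkm10, ipk01, ipk0m1, ipkm11, ipk1m1]
      have hs : 0 < ξ 0 ^ 2 + ξ 1 ^ 2 := by
        have : ξ 0 ≠ 0 ∨ ξ 1 ≠ 0 := by
          by_contra hcon
          push_neg at hcon
          exact hξ (funext fun i => by fin_cases i <;> simp [hcon.1, hcon.2])
        rcases this with h | h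
        · nlinarith [sq_pos' h, sq_nonneg (ξ 1)]
        · nlinarith [sq_pos' h, sq_nonneg (ξ 0)]
      have hu : 0 < (2 * η 0 ^ 2) + (2 * η 1 ^ 2) + (2 * (η 1 - η 0) ^ 2) := by
        have : η 0 ≠ 0 ∨ η 1 ≠ 0 := by
          by_contra hcon
          push_neg at hcon
          exact hη (funext fun i => by fin_cases i <;> simp [hcon.1, hcon.2])
        rcases this with h | h
        · nlinarith [sq_pos' h, sq_nonneg (η 1), sq_nonneg (η 1 - η 0)]
        · nlinarith [sq_pos' h, sq_nonneg (η 0), sq_nonneg (η 1 - η 0)]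
      refine bound_min _ _ _ _ ?_ ?_
      · linarith [mul_pos hs hu]
      · rcases le_total a b with hab | hab
        · rw [min_eq_left (by linarith : (3 * a + b) / 4 ≤ (a + 3 * b) / 4)]
          have key : 4 * ((2 * η 0 ^ 2) * (a * ((ξ 0 ^ 2 + ξ 1 ^ 2) - ξ 0 ^ 2) + b * ξ 0 ^ 2) + (2 * η 1 ^ 2) * (a * ((ξ 0 ^ 2 + ξ 1 ^ 2) - (ξ 0 / 2 + Real.sqrt 3 / 2 * ξ 1) ^ 2) + b * (ξ 0 / 2 + Real.sqrt 3 / 2 * ξ 1) ^ 2) + (2 * (η 1 - η 0) ^ 2) * (a * ((ξ 0 ^ 2 + ξ 1 ^ 2) - (-(ξ 0) / 2 + Real.sqrt 3 / 2 * ξ 1) ^ 2) + b * (-(ξ 0) / 2 + Real.sqrt 3 / 2 * ξ 1) ^ 2)) - (3 * a + b) * ((ξ 0 ^ 2 + ξ 1 ^ 2) * ((2 * η 0 ^ 2) + (2 * η 1 ^ 2) + (2 * (η 1 - η 0) ^ 2)))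
              = 2 * (b - a) * (Real.sqrt 3 * η 0 * ξ 0 + (2 * η 1 - η 0) * ξ 1) ^ 2 := by
            linear_combination (4 * ξ 1 ^ 2 * b * η 1 ^ 2 + (-4) * ξ 1 ^ 2 * b * η 0 * η 1 + 2 * ξ 1 ^ 2 * b * η 0 ^ 2 + (-4) * ξ 1 ^ 2 * a * η 1 ^ 2 + 4 * ξ 1 ^ 2 * a * η 0 * η 1 + (-2) * ξ 1 ^ 2 * a * η 0 ^ 2 + (-2) * ξ 0 ^ 2 * b * η 0 ^ 2 + 2 * ξ 0 ^ 2 * a * η 0 ^ 2) * h3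
          linarith [key, mul_nonneg (sub_nonneg.2 hab) (sq_nonneg ((Real.sqrt 3 * η 0 * ξ 0 + (2 * η 1 - η 0) * ξ 1)))]
        · rw [min_eq_right (by linarith : (a + 3 * b) / 4 ≤ (3 * a + b) / 4)]
          have key : 4 * ((2 * η 0 ^ 2) * (a * ((ξ 0 ^ 2 + ξ 1 ^ 2) - ξ 0 ^ 2) + b * ξ 0 ^ 2) + (2 * η 1 ^ 2) * (a * ((ξ 0 ^ 2 + ξ 1 ^ 2) - (ξ 0 / 2 + Real.sqrt 3 / 2 * ξ 1) ^ 2) + b * (ξ 0 / 2 + Real.sqrt 3 / 2 * ξ 1) ^ 2) + (2 * (η 1 - η 0) ^ 2) * (a * ((ξ 0 ^ 2 + ξ 1 ^ 2) - (-(ξ 0) / 2 + Real.sqrt 3 / 2 * ξ 1) ^ 2) + b * (-(ξ 0) / 2 + Real.sqrt 3 / 2 * ξ 1) ^ 2)) - (a + 3 * b) * ((ξ 0 ^ 2 + ξ 1 ^ 2) * ((2 * η 0 ^ 2) + (2 * η 1 ^ 2) + (2 * (η 1 - η 0) ^ 2)))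
              = 2 * (a - b) * ((2 * η 1 - η 0) * ξ 0 - Real.sqrt 3 * η 0 * ξ 1) ^ 2 := by
            linear_combination (4 * ξ 1 ^ 2 * b * η 1 ^ 2 + (-4) * ξ 1 ^ 2 * b * η 0 * η 1 + 4 * ξ 1 ^ 2 * b * η 0 ^ 2 + (-4) * ξ 1 ^ 2 * a * η 1 ^ 2 + 4 * ξ 1 ^ 2 * a * η 0 * η 1 + (-4) * ξ 1 ^ 2 * a * η 0 ^ 2) * h3
          linarith [key, mul_nonneg (sub_nonneg.2 hab) (sq_nonneg (((2 * η 1 - η 0) * ξ 0 - Real.sqrt 3 * η 0 * ξ 1)))]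
  refine ⟨hA.trans hL.symm, hL.trans ?_⟩
  rcases le_total a b with hab | hab
  · rw [min_eq_left (by linarith), abs_of_nonneg (by linarith : (0:ℝ) ≤ b - a)]
    ring
  · rw [min_eq_right (by linarith), abs_of_nonpos (by linarith : b - a ≤ 0)]
    ring

/-- for the triangular lattice with nearest-neighbour pair
interactions `V₀`, at the uniform dilation `M(t) = tM` the atomistic and the
modified Legendre–Hadamard stability constants coincide and equal
`½(V₀''(t) + V₀'(t)/t) − ¼|V₀''(t) − V₀'(t)/t|`. -/
theorem triangular_lattice_stability_constants
    (V₀ : ℝ → ℝ) (hV₀ : ContDiffOn ℝ 2 V₀ (Set.Ioi 0))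
    (t : ℝ) (ht : 0 < t) :
    lamAtomCS (triK (deriv V₀ t / t) (deriv (deriv V₀) t)) =
      lamTildeLH (triK (deriv V₀ t / t) (deriv (deriv V₀) t)) ∧
    lamTildeLH (triK (deriv V₀ t / t) (deriv (deriv V₀) t)) =
      1 / 2 * (deriv (deriv V₀) t + deriv V₀ t / t) -
        1 / 4 * |deriv (deriv V₀) t - deriv V₀ t / t| := by
  exact main_core (deriv V₀ t / t) (deriv (deriv V₀) t)

end
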